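/- Let A be a left brace such that A³ = ⟨0⟩, and suppose A is generated as a brace by an element a. Put a₁ = a, a₂ = a₁ ⋆ a, a₃ = a₂ ⋆ a. Then A is nilpotent in the sense of Smoktunowicz; more precisely: if a₃ = 0 then A^{(3)} = ⟨0⟩ = A³ (i.e. A ∈ 𝒩_S(3,3)), and if a₃ ≠ 0 then A^{(4)} = ⟨0⟩ and A³ = ⟨0⟩ with A^{(3)} ≠ ⟨0⟩ (i.e. A ∈ 𝒩_S(4,3)). -/

import Mathlib

/-- A left brace: `(A, +)` is an abelian group, `(A, *)` is a group, and
`a * (b + c) = a * b + a * c - a` for all `a b c`. -/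
class LeftBrace (A : Type*) extends AddCommGroup A, Group A where
  mul_add_eq : ∀ a b c : A, a * (b + c) = a * b + a * c - a

namespace LeftBrace

variable {A : Type*} [LeftBrace A]

/-- The star operation of a left brace: `a ⋆ b = a * b - a - b`. -/
def star (a b : A) : A := a * b - a - b

/-- `K ⋆ L`: the subgroup of the additive group of `A` generated by all
`x ⋆ y` with `x ∈ K`, `y ∈ L`. -/
def setStar (K L : Set A) : AddSubgroup A :=
  AddSubgroup.closure (Set.image2 star K L)

/-- A subbrace of `A`: a subset that is simultaneously a subgroup of the
additive group of `A` and a subgroup of the multiplicative group of `A`. -/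
def IsSubbrace (S : Set A) : Prop :=
  (0 : A) ∈ S ∧ (∀ x ∈ S, ∀ y ∈ S, x + y ∈ S) ∧ (∀ x ∈ S, -x ∈ S) ∧
    (1 : A) ∈ S ∧ (∀ x ∈ S, ∀ y ∈ S, x * y ∈ S) ∧ (∀ x ∈ S, x⁻¹ ∈ S)

/-- A left ideal of `A`: a subbrace `S` with `a ⋆ b ∈ S` for all `a ∈ A`, `b ∈ S`. -/
def IsLeftIdeal (S : Set A) : Prop :=
  IsSubbrace S ∧ ∀ a : A, ∀ b ∈ S, star a b ∈ S

/-- An ideal of `A`: a subbrace `S` with `a ⋆ z ∈ S` and `z ⋆ a ∈ S`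
for all `a ∈ A`, `z ∈ S`. -/
def IsIdeal (S : Set A) : Prop :=
  IsSubbrace S ∧ ∀ a : A, ∀ z ∈ S, star a z ∈ S ∧ star z a ∈ S

/-- The left series of the brace `A`, with the indexing shifted by one:
`leftSeriesN A 0 = A¹ = A` and `leftSeriesN A n = Aⁿ⁺¹ = A ⋆ Aⁿ`.
In particular `leftSeriesN A 1 = A²` and `leftSeriesN A 2 = A³`. -/
def leftSeriesN (A : Type*) [LeftBrace A] : ℕ → AddSubgroup A
  | 0 => ⊤
  | n + 1 => setStar Set.univ ((leftSeriesN A n : AddSubgroup A) : Set A)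

/-- The right series of the brace `A`, with the indexing shifted by one:
`rightSeriesN A 0 = A⁽¹⁾ = A` and `rightSeriesN A n = A⁽ⁿ⁺¹⁾ = A⁽ⁿ⁾ ⋆ A`.
In particular `rightSeriesN A 2 = A⁽³⁾` and `rightSeriesN A 3 = A⁽⁴⁾`. -/
def rightSeriesN (A : Type*) [LeftBrace A] : ℕ → AddSubgroup A
  | 0 => ⊤
  | n + 1 => setStar ((rightSeriesN A n : AddSubgroup A) : Set A) Set.univ

end LeftBrace

open LeftBrace

section OGAux

variable {A : Type*} [LeftBrace A]

lemma OG_mul_add (x b c : A) : x * (b + c) = x * b + x * c - x :=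
  LeftBrace.mul_add_eq x b c

lemma OG_mul_zero (x : A) : x * 0 = x := by
  have h := OG_mul_add x 0 0
  rw [add_zero] at h
  have h3 : x - x * 0 = x * 0 - (x * 0 + x * 0 - x) := by abel
  rw [← h, sub_self] at h3
  exact (sub_eq_zero.mp h3).symm

lemma OG_zero_eq_one : (0 : A) = 1 := by
  have h := OG_mul_zero (1 : A); rwa [one_mul] at h

lemma OG_mul_eq (x y : A) : x * y = x + y + star x y := by
  simp only [LeftBrace.star]; abel

lemma OG_mul_sub (x b c : A) : x * (b - c) = x * b - x * c + x := by
  have h := OG_mul_add x (b - c) c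
  rw [sub_add_cancel] at h
  rw [h]; abel

-- star is additive in the second argument
lemma OG_star_add_right (x b c : A) : star x (b + c) = star x b + star x c := by
  simp only [LeftBrace.star, OG_mul_add]; abel

/-- star x · as an additive hom. -/
def OG_starHom (x : A) : A →+ A := AddMonoidHom.mk' (star x) (OG_star_add_right x)

lemma OG_star_zero_right (x : A) : star x 0 = 0 := (OG_starHom x).map_zero

lemma OG_star_one_left (c : A) : star 1 c = 0 := by
  simp only [LeftBrace.star, one_mul]
  rw [← OG_zero_eq_one]; abel

lemma OG_star_zero_left (c : A) : star 0 c = 0 := by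
  have h : LeftBrace.star (0:A) c = LeftBrace.star 1 c := by rw [OG_zero_eq_one]
  rw [h]; exact OG_star_one_left c

/-- The fundamental identity `(xy) ⋆ c = x ⋆ (y ⋆ c) + y ⋆ c + x ⋆ c`. -/
lemma OG_star_mul (x y c : A) :
    star (x * y) c = star x (star y c) + star y c + star x c := by
  simp only [LeftBrace.star, mul_assoc, OG_mul_sub]
  abel

lemma OG_A2_def : leftSeriesN A 1 = AddSubgroup.closure (Set.image2 LeftBrace.star Set.univ Set.univ) := by
  show setStar Set.univ ((⊤ : AddSubgroup A) : Set A) = _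
  rw [setStar, AddSubgroup.coe_top]

lemma OG_R1_def : rightSeriesN A 1 = leftSeriesN A 1 := by
  rw [OG_A2_def]
  show setStar ((⊤ : AddSubgroup A) : Set A) Set.univ = _
  rw [setStar, AddSubgroup.coe_top]

lemma OG_star_mem_A2 (x y : A) : star x y ∈ leftSeriesN A 1 := by
  rw [OG_A2_def]
  exact AddSubgroup.subset_closure (Set.mem_image2_of_mem trivial trivial)

lemma OG_L2_def : leftSeriesN A 2 = setStar Set.univ ((leftSeriesN A 1 : AddSubgroup A) : Set A) := rfl

lemma OG_star_right_zero (h3 : leftSeriesN A 2 = ⊥) (x u : A)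
    (hu : u ∈ leftSeriesN A 1) : star x u = 0 := by
  have hm : star x u ∈ leftSeriesN A 2 := by
    rw [OG_L2_def]
    exact AddSubgroup.subset_closure (Set.mem_image2_of_mem trivial hu)
  rw [h3] at hm
  exact AddSubgroup.mem_bot.mp hm

lemma OG_mul_eq_add_right (h3 : leftSeriesN A 2 = ⊥) (x u : A)
    (hu : u ∈ leftSeriesN A 1) : x * u = x + u := by
  rw [OG_mul_eq x u, OG_star_right_zero h3 x u hu, add_zero]

lemma OG_star_mul_left (h3 : leftSeriesN A 2 = ⊥) (x y c : A) :
    star (x * y) c = star x c + star y c := by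
  rw [OG_star_mul, OG_star_right_zero h3 x (star y c) (OG_star_mem_A2 y c), zero_add,
    add_comm]

lemma OG_star_inv_left (h3 : leftSeriesN A 2 = ⊥) (x c : A) :
    star x⁻¹ c = - star x c := by
  have h := OG_star_mul_left h3 x⁻¹ x c
  rw [inv_mul_cancel, OG_star_one_left] at h
  exact eq_neg_of_add_eq_zero_left h.symm

lemma OG_star_add_left (h3 : leftSeriesN A 2 = ⊥) (x u c : A)
    (hu : u ∈ leftSeriesN A 1) : star (x + u) c = star x c + star u c := by
  rw [← OG_mul_eq_add_right h3 x u hu, OG_star_mul_left h3]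

lemma OG_star_neg_left (h3 : leftSeriesN A 2 = ⊥) (u c : A)
    (hu : u ∈ leftSeriesN A 1) : star (-u) c = - star u c := by
  have h := OG_star_add_left h3 (-u) u c hu
  rw [neg_add_cancel, OG_star_zero_left] at h
  exact eq_neg_of_add_eq_zero_left h.symm

lemma OG_star_zsmul_left (h3 : leftSeriesN A 2 = ⊥) (u c : A)
    (hu : u ∈ leftSeriesN A 1) (k : ℤ) : star (k • u) c = k • star u c := by
  induction k using Int.induction_on with
  | zero => rw [zero_zsmul, zero_zsmul, OG_star_zero_left]
  | succ n ih =>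
      rw [add_zsmul, one_zsmul, OG_star_add_left h3 _ u c hu, ih, add_zsmul, one_zsmul]
  | pred n ih =>
      have h1 : (-(n:ℤ) - 1) • u = (-(n:ℤ)) • u + -u := by
        rw [show (-(n:ℤ) - 1) = -(n:ℤ) + (-1) from by ring, add_zsmul]
        simp
      rw [h1, OG_star_add_left h3 _ (-u) c (neg_mem hu), ih,
        OG_star_neg_left h3 u c hu,
        show (-(n:ℤ) - 1) = -(n:ℤ) + (-1) from by ring, add_zsmul]
      simp

lemma OG_star_zpow_left (h3 : leftSeriesN A 2 = ⊥) (a c : A) (n : ℤ) :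
    star (a ^ n) c = n • star a c := by
  induction n using Int.induction_on with
  | zero => rw [zpow_zero, OG_star_one_left, zero_zsmul]
  | succ n ih =>
      rw [zpow_add_one, OG_star_mul_left h3, ih, add_zsmul, one_zsmul]
  | pred n ih =>
      have h1 : a ^ (-(n:ℤ) - 1) = a ^ (-(n:ℤ)) * a⁻¹ := zpow_sub_one a _
      rw [h1, OG_star_mul_left h3, OG_star_inv_left h3, ih,
        show (-(n:ℤ) - 1) = -(n:ℤ) + (-1) from by ring, add_zsmul]
      simp

lemma OG_inv_eq (x : A) : x⁻¹ = -x - star x x⁻¹ := by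
  have h := OG_mul_eq x x⁻¹
  rw [mul_inv_cancel, ← OG_zero_eq_one] at h
  have h2 : x⁻¹ = 0 - x - star x x⁻¹ := by rw [h]; abel
  simpa using h2

lemma OG_add_inv_mem (x : A) : x + x⁻¹ ∈ leftSeriesN A 1 := by
  have h := OG_mul_eq x x⁻¹
  rw [mul_inv_cancel, ← OG_zero_eq_one] at h
  have h2 : x + x⁻¹ = -(star x x⁻¹) + 0 := by rw [h]; abel
  rw [h2, add_zero]
  exact neg_mem (OG_star_mem_A2 _ _)

lemma OG_deg (a : A)
    (hgen : ∀ S : Set A, IsSubbrace S → a ∈ S → S = Set.univ) :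
    ∀ x : A, ∃ n : ℤ, x - a ^ n ∈ leftSeriesN A 1 := by
  intro x
  set S : Set A := {x | ∃ n : ℤ, x - a ^ n ∈ leftSeriesN A 1} with hS
  have hzero : (0 : A) ∈ S := by
    refine ⟨0, ?_⟩
    rw [zpow_zero, ← OG_zero_eq_one, sub_zero]
    exact zero_mem _
  have hone : (1 : A) ∈ S := by
    refine ⟨0, ?_⟩
    rw [zpow_zero, sub_self]
    exact zero_mem _
  have hadd : ∀ x ∈ S, ∀ y ∈ S, x + y ∈ S := by
    rintro x ⟨n, hn⟩ y ⟨m, hm⟩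
    refine ⟨n + m, ?_⟩
    have he : x + y - a ^ (n + m)
        = (x - a ^ n) + (y - a ^ m) + -(star (a ^ n) (a ^ m)) := by
      rw [zpow_add, OG_mul_eq (a ^ n)]; abel
    rw [he]
    exact add_mem (add_mem hn hm) (neg_mem (OG_star_mem_A2 _ _))
  have hneg : ∀ x ∈ S, -x ∈ S := by
    rintro x ⟨n, hn⟩
    refine ⟨-n, ?_⟩
    have hm : a ^ n + a ^ (-n) ∈ leftSeriesN A 1 := by
      have he2 : a ^ n + a ^ (-n) = -(star (a ^ n) (a ^ (-n))) + a ^ (n + (-n)) := by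
        rw [zpow_add, OG_mul_eq]; abel
      rw [he2, add_neg_cancel, zpow_zero, ← OG_zero_eq_one, add_zero]
      exact neg_mem (OG_star_mem_A2 _ _)
    have he : -x - a ^ (-n) = -(x - a ^ n) + -(a ^ n + a ^ (-n)) := by abel
    rw [he]
    exact add_mem (neg_mem hn) (neg_mem hm)
  have hmul : ∀ x ∈ S, ∀ y ∈ S, x * y ∈ S := by
    rintro x ⟨n, hn⟩ y ⟨m, hm⟩
    refine ⟨n + m, ?_⟩
    have he : x * y - a ^ (n + m)
        = (x - a ^ n) + (y - a ^ m) + star x y + -(star (a ^ n) (a ^ m)) := by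
      rw [OG_mul_eq x y, zpow_add, OG_mul_eq (a ^ n)]; abel
    rw [he]
    exact add_mem (add_mem (add_mem hn hm) (OG_star_mem_A2 _ _))
      (neg_mem (OG_star_mem_A2 _ _))
  have hinv : ∀ x ∈ S, x⁻¹ ∈ S := by
    rintro x ⟨n, hn⟩
    refine ⟨-n, ?_⟩
    have hm : a ^ n + a ^ (-n) ∈ leftSeriesN A 1 := by
      have he2 : a ^ n + a ^ (-n) = -(star (a ^ n) (a ^ (-n))) + a ^ (n + (-n)) := by
        rw [zpow_add, OG_mul_eq]; abel
      rw [he2, add_neg_cancel, zpow_zero, ← OG_zero_eq_one, add_zero]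
      exact neg_mem (OG_star_mem_A2 _ _)
    have he : x⁻¹ - a ^ (-n)
        = -(x - a ^ n) + -(a ^ n + a ^ (-n)) + (x + x⁻¹) := by abel
    rw [he]
    exact add_mem (add_mem (neg_mem hn) (neg_mem hm)) (OG_add_inv_mem x)
  have hsub : IsSubbrace S := ⟨hzero, hadd, hneg, hone, hmul, hinv⟩
  have ha : a ∈ S := ⟨1, by rw [zpow_one, sub_self]; exact zero_mem _⟩
  have huniv := hgen S hsub ha
  have hx : x ∈ S := by rw [huniv]; trivial
  exact hx

lemma OG_zpow_lin (h3 : leftSeriesN A 2 = ⊥) (a : A) :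
    ∀ n : ℤ, a ^ n - n • a ∈ leftSeriesN A 1 := by
  intro n
  induction n using Int.induction_on with
  | zero => rw [zpow_zero, zero_zsmul, sub_zero, ← OG_zero_eq_one]; exact zero_mem _
  | succ n ih =>
      have he : a ^ ((n : ℤ) + 1) - ((n : ℤ) + 1) • a
          = (a ^ (n : ℤ) - (n : ℤ) • a) + star (a ^ (n : ℤ)) a := by
        rw [zpow_add_one, OG_mul_eq, add_zsmul, one_zsmul]; abel
      rw [he]
      exact add_mem ih (OG_star_mem_A2 _ _)
  | pred n ih =>
      have he : a ^ (-(n : ℤ) - 1) - (-(n : ℤ) - 1) • a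
          = (a ^ (-(n : ℤ)) - (-(n : ℤ)) • a) + star (a ^ (-(n : ℤ))) a⁻¹
            + (a + a⁻¹) := by
        rw [zpow_sub_one, OG_mul_eq,
          show (-(n : ℤ) - 1) = -(n : ℤ) + (-1) from by ring, add_zsmul,
          neg_zsmul, neg_zsmul, one_zsmul]
        abel
      rw [he]
      exact add_mem (add_mem ih (OG_star_mem_A2 _ _)) (OG_add_inv_mem a)

lemma OG_KL (h3 : leftSeriesN A 2 = ⊥) (a u : A) (hu : u ∈ leftSeriesN A 1) :
    star (star u a) a = 0 := by
  have hwA2 : star u a ∈ leftSeriesN A 1 := OG_star_mem_A2 u a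
  have h1 : u * (a + -(star u a)) = a * u := by
    rw [OG_mul_add u a (-(star u a)), OG_mul_eq u a,
      OG_mul_eq_add_right h3 u _ (neg_mem hwA2), OG_mul_eq_add_right h3 a u hu]
    abel
  have h2 : a + -(star u a) = a * (-(star u a)) :=
    (OG_mul_eq_add_right h3 a _ (neg_mem hwA2)).symm
  rw [h2] at h1
  have h4 : -(star u a) = a⁻¹ * (u⁻¹ * (a * u)) := by
    rw [← h1]
    group
  have h5 : star (-(star u a)) a = 0 := by
    rw [h4, OG_star_mul_left h3, OG_star_mul_left h3, OG_star_mul_left h3,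
      OG_star_inv_left h3, OG_star_inv_left h3]
    abel
  rw [OG_star_neg_left h3 (star u a) a hwA2] at h5
  exact neg_eq_zero.mp h5

lemma OG_starHom_apply (x b : A) : OG_starHom x b = star x b := rfl

lemma OG_star_zsmul_right (x b : A) (k : ℤ) : star x (k • b) = k • star x b := by
  have := map_zsmul (OG_starHom x) k b
  rwa [OG_starHom_apply, OG_starHom_apply] at this

lemma OG_star_zpow_right (h3 : leftSeriesN A 2 = ⊥) (a u : A) (k : ℤ) :
    star u (a ^ k) = k • star u a := by
  have hw := OG_zpow_lin h3 a k
  have he : a ^ k = k • a + (a ^ k - k • a) := by abel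
  rw [he, OG_star_add_right, OG_star_zsmul_right,
    OG_star_right_zero h3 u _ hw, add_zero]

lemma OG_star_any_right (h3 : leftSeriesN A 2 = ⊥) (a : A)
    (hdeg : ∀ x : A, ∃ n : ℤ, x - a ^ n ∈ leftSeriesN A 1)
    (u z : A) : ∃ k : ℤ, star u z = k • star u a := by
  obtain ⟨k, hk⟩ := hdeg z
  refine ⟨k, ?_⟩
  have he : z = a ^ k + (z - a ^ k) := by abel
  rw [he, OG_star_add_right, OG_star_right_zero h3 u _ hk, add_zero,
    OG_star_zpow_right h3]

/-- Decomposition of an arbitrary `star x y`. -/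
lemma OG_star_decomp (h3 : leftSeriesN A 2 = ⊥) (a : A)
    (hdeg : ∀ x : A, ∃ n : ℤ, x - a ^ n ∈ leftSeriesN A 1) (x y : A) :
    ∃ (n m : ℤ) (u : A), u ∈ leftSeriesN A 1 ∧
      star x y = (m * n) • star a a + m • star u a := by
  obtain ⟨n, hu⟩ := hdeg x
  obtain ⟨m, hv⟩ := hdeg y
  refine ⟨n, m, x - a ^ n, hu, ?_⟩
  have hx : x = a ^ n + (x - a ^ n) := by abel
  have h1 : star x y = star (a ^ n) y + star (x - a ^ n) y := by
    nth_rewrite 1 [hx]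
    exact OG_star_add_left h3 _ _ _ hu
  have hy : y = a ^ m + (y - a ^ m) := by abel
  have h2 : star (a ^ n) y = (m * n) • star a a := by
    rw [hy, OG_star_add_right, OG_star_right_zero h3 _ _ hv, add_zero,
      OG_star_zpow_right h3, OG_star_zpow_left h3, smul_smul]
  have h3' : star (x - a ^ n) y = m • star (x - a ^ n) a := by
    rw [hy, OG_star_add_right, OG_star_right_zero h3 _ _ hv, add_zero,
      OG_star_zpow_right h3]
  rw [h1, h2, h3']

/-- Master lemma: for `u ∈ A²`, `star u a` is an integer multiple of `a₃`. -/
lemma OG_ML (h3 : leftSeriesN A 2 = ⊥) (a : A)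
    (hdeg : ∀ x : A, ∃ n : ℤ, x - a ^ n ∈ leftSeriesN A 1) :
    ∀ u ∈ leftSeriesN A 1, ∃ k : ℤ, star u a = k • star (star a a) a := by
  set H : AddSubgroup A :=
    { carrier := {u | u ∈ leftSeriesN A 1 ∧
        ∃ k : ℤ, star u a = k • star (star a a) a}
      zero_mem' := ⟨zero_mem _, 0, by rw [OG_star_zero_left, zero_zsmul]⟩
      add_mem' := by
        rintro x y ⟨hx, k, hk⟩ ⟨hy, j, hj⟩
        exact ⟨add_mem hx hy, k + j, by
          rw [OG_star_add_left h3 x y a hy, hk, hj, add_zsmul]⟩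
      neg_mem' := by
        rintro x ⟨hx, k, hk⟩
        exact ⟨neg_mem hx, -k, by
          rw [OG_star_neg_left h3 x a hx, hk, neg_zsmul]⟩ } with hH
  have hle : leftSeriesN A 1 ≤ H := by
    rw [OG_A2_def]
    refine (AddSubgroup.closure_le H).mpr ?_
    rintro z ⟨x, -, y, -, rfl⟩
    refine ⟨OG_star_mem_A2 x y, ?_⟩
    obtain ⟨n, m, u, huA, hdecomp⟩ := OG_star_decomp h3 a hdeg x y
    refine ⟨m * n, ?_⟩
    rw [hdecomp,
      OG_star_add_left h3 _ _ a (AddSubgroup.zsmul_mem _ (OG_star_mem_A2 u a) m),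
      OG_star_zsmul_left h3 _ _ (OG_star_mem_A2 a a) (m * n),
      OG_star_zsmul_left h3 _ _ (OG_star_mem_A2 u a) m,
      OG_KL h3 a u huA, smul_zero, add_zero]
  exact fun u hu => (hle hu).2

/-- Every generator value `star u z` (with `u ∈ A²`) is a multiple of `a₃`. -/
lemma OG_R2_gen (h3 : leftSeriesN A 2 = ⊥) (a : A)
    (hdeg : ∀ x : A, ∃ n : ℤ, x - a ^ n ∈ leftSeriesN A 1)
    (u z : A) (hu : u ∈ leftSeriesN A 1) :
    ∃ k : ℤ, star u z = k • star (star a a) a := by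
  obtain ⟨k, hk⟩ := OG_star_any_right h3 a hdeg u z
  obtain ⟨j, hj⟩ := OG_ML h3 a hdeg u hu
  exact ⟨k * j, by rw [hk, hj, smul_smul]⟩

end OGAux


/-- **Theorem A, second part.** Let `A` be a left brace with
`A³ = ⟨0⟩` (here `A³ = A ⋆ (A ⋆ A) = leftSeriesN A 2` and
`A⁽³⁾ = rightSeriesN A 2`, `A⁽⁴⁾ = rightSeriesN A 3`), generated as a brace by
the element `a`.  Put `a₁ = a`, `a₂ = a₁ ⋆ a`, `a₃ = a₂ ⋆ a`.  Then `A` is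
nilpotent in the sense of Smoktunowicz; more precisely: if `a₃ = 0` then
`A⁽³⁾ = ⟨0⟩ = A³` (so `A ∈ 𝒩_S(3,3)`), and if `a₃ ≠ 0` then `A⁽⁴⁾ = ⟨0⟩` and
`A³ = ⟨0⟩` with `A⁽³⁾ ≠ ⟨0⟩` (so `A ∈ 𝒩_S(4,3)`). -/
theorem one_generator_nilpotent {A : Type*} [LeftBrace A] (a : A)
    (h3 : leftSeriesN A 2 = ⊥)
    (hgen : ∀ S : Set A, IsSubbrace S → a ∈ S → S = Set.univ) :
    (star (star a a) a = 0 →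
      rightSeriesN A 2 = ⊥ ∧ leftSeriesN A 2 = ⊥) ∧
    (star (star a a) a ≠ 0 →
      rightSeriesN A 3 = ⊥ ∧ leftSeriesN A 2 = ⊥ ∧ rightSeriesN A 2 ≠ ⊥) := by

  have hdeg := OG_deg a hgen
  have hR2def : rightSeriesN A 2
      = setStar ((rightSeriesN A 1 : AddSubgroup A) : Set A) Set.univ := rfl
  have hR3def : rightSeriesN A 3
      = setStar ((rightSeriesN A 2 : AddSubgroup A) : Set A) Set.univ := rfl
  constructor
  · intro ha3z
    refine ⟨?_, h3⟩
    rw [hR2def, setStar, eq_bot_iff]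
    refine (AddSubgroup.closure_le _).mpr ?_
    rintro z ⟨u, hu, y, -, rfl⟩
    have huA : u ∈ leftSeriesN A 1 := by rw [← OG_R1_def]; exact hu
    obtain ⟨k, hk⟩ := OG_R2_gen h3 a hdeg u y huA
    simp only [AddSubgroup.coe_bot, Set.mem_singleton_iff]
    rw [hk, ha3z, smul_zero]
  · intro ha3nz
    refine ⟨?_, h3, ?_⟩
    · have hH2 : ∀ u ∈ rightSeriesN A 2, u ∈ leftSeriesN A 1 ∧ star u a = 0 := by
        set H2 : AddSubgroup A :=
          { carrier := {u | u ∈ leftSeriesN A 1 ∧ star u a = 0}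
            zero_mem' := ⟨zero_mem _, OG_star_zero_left a⟩
            add_mem' := by
              rintro x y ⟨hx, hx0⟩ ⟨hy, hy0⟩
              exact ⟨add_mem hx hy, by
                rw [OG_star_add_left h3 x y a hy, hx0, hy0, add_zero]⟩
            neg_mem' := by
              rintro x ⟨hx, hx0⟩
              exact ⟨neg_mem hx, by
                rw [OG_star_neg_left h3 x a hx, hx0, neg_zero]⟩ } with hH2def
        have hle : rightSeriesN A 2 ≤ H2 := by
          rw [hR2def, setStar]
          refine (AddSubgroup.closure_le _).mpr ?_
          rintro z ⟨u, hu, y, -, rfl⟩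
          have huA : u ∈ leftSeriesN A 1 := by rw [← OG_R1_def]; exact hu
          refine ⟨OG_star_mem_A2 u y, ?_⟩
          obtain ⟨k, hk⟩ := OG_R2_gen h3 a hdeg u y huA
          rw [hk, OG_star_zsmul_left h3 _ _ (OG_star_mem_A2 (star a a) a) k,
            OG_KL h3 a (star a a) (OG_star_mem_A2 a a), smul_zero]
        exact fun u hu => hle hu
      rw [hR3def, setStar, eq_bot_iff]
      refine (AddSubgroup.closure_le _).mpr ?_
      rintro z ⟨u, hu, y, -, rfl⟩
      obtain ⟨huA, hu0⟩ := hH2 u hu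
      obtain ⟨k, hk⟩ := OG_star_any_right h3 a hdeg u y
      simp only [AddSubgroup.coe_bot, Set.mem_singleton_iff]
      rw [hk, hu0, smul_zero]
    · intro hbot
      apply ha3nz
      have hmem : star (star a a) a ∈ rightSeriesN A 2 := by
        rw [hR2def, setStar]
        exact AddSubgroup.subset_closure
          (Set.mem_image2_of_mem
            (by rw [OG_R1_def]; exact OG_star_mem_A2 a a) trivial)
      rw [hbot] at hmem
      exact AddSubgroup.mem_bot.mp hmem
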